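/- arXiv:2101.01746 — 2 statements merged into one kernel-verified Lean document; each statement's English description precedes it below -/
import Mathlib

section
/- Let ν be a finite positive Borel measure on 𝕋 supported on a closed set E ⊂ 𝕋, and let S_ν(z) = exp(−∫_𝕋 (ζ+z)/(ζ−z) dν(ζ)) be the associated singular inner function. Then for every positive integer k there is a constant D_k > 0 such that for all z ∈ 𝕋 \ E (where S_ν extends analytically), |S_ν^{(k)}(z)| ≤ D_k · δ_E(z)^{−2k}, where δ_E(z) is the distance from z to E. -/
open Metric MeasureTheory

set_option linter.unusedSectionVars false
set_option maxHeartbeats 1000000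

noncomputable section

/-- The singular inner function associated with a finite positive Borel measure on the
unit circle: `S_ν(z) = exp(−∫ (ζ+z)/(ζ−z) dν(ζ))`. -/
noncomputable def singularInner (ν : Measure ℂ) (z : ℂ) : ℂ :=
  Complex.exp (-∫ ζ, (ζ + z) / (ζ - z) ∂ν)

namespace SIAux

/-- Real part vanishes on the circle. -/
lemma re_zero {ζ z : ℂ} (hζ : ‖ζ‖ = 1) (hz : ‖z‖ = 1) (hzζ : ζ ≠ z) :
    ((ζ + z) / (ζ - z)).re = 0 := by
  have hN : Complex.normSq (ζ - z) ≠ 0 := by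
    simpa [Complex.normSq_eq_zero] using sub_ne_zero.mpr hzζ
  have h1 : ζ.re * ζ.re + ζ.im * ζ.im = 1 := by
    have := Complex.sq_norm ζ
    rw [hζ] at this
    simpa [Complex.normSq_apply] using this.symm
  have h2 : z.re * z.re + z.im * z.im = 1 := by
    have := Complex.sq_norm z
    rw [hz] at this
    simpa [Complex.normSq_apply] using this.symm
  rw [Complex.div_re, ← add_div, div_eq_zero_iff]
  left
  simp only [Complex.add_re, Complex.add_im, Complex.sub_re, Complex.sub_im]
  nlinarith [h1, h2]

/-- Iterated derivatives of the zero function vanish. -/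
lemma iteratedDeriv_zero_fun : ∀ n : ℕ, iteratedDeriv n (fun _ : ℂ => (0:ℂ)) = fun _ => 0 := by
  intro n
  induction n with
  | zero => simp [iteratedDeriv_zero]
  | succ n ih =>
    rw [iteratedDeriv_succ']
    simpa [deriv_const'] using ih

/-- The abstract induction: if `S' = -I₁·S` on `Eᶜ` with `I₁` differentiable there and
bounded by `2M/δ²`, then `S⁽ᵏ⁾ = S·g_k` with `‖g_k‖ ≤ C_k / min(δ,1)^{2k}`. -/
lemma key_induction (E : Set ℂ) (hEclosed : IsClosed E) (S I1 : ℂ → ℂ) (M : ℝ) (hM : 0 ≤ M)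
    (hδpos : ∀ z ∉ E, 0 < infDist z E)
    (hS : ∀ z ∉ E, HasDerivAt S (S z * -(I1 z)) z)
    (hI1diff : DifferentiableOn ℂ I1 Eᶜ)
    (hI1bound : ∀ z ∉ E, ‖I1 z‖ ≤ 2 * M / (infDist z E)^2) :
    ∀ k : ℕ, ∃ C > (0:ℝ), ∃ g : ℂ → ℂ, DifferentiableOn ℂ g Eᶜ ∧
      (∀ z ∉ E, ‖g z‖ ≤ C / (min (infDist z E) 1)^(2*k)) ∧
      (∀ z ∉ E, iteratedDeriv k S z = S z * g z) := by
  have hopen : IsOpen Eᶜ := hEclosed.isOpen_compl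
  intro k
  induction k with
  | zero =>
    refine ⟨1, one_pos, fun _ => 1, differentiableOn_const 1, ?_, ?_⟩
    · intro z hz; simp
    · intro z hz; simp [iteratedDeriv_zero]
  | succ k ih =>
    obtain ⟨C, hC, g, hgd, hgb, hrep⟩ := ih
    have hganal : AnalyticOnNhd ℂ g Eᶜ := hgd.analyticOnNhd hopen
    have hgderiv : DifferentiableOn ℂ (deriv g) Eᶜ := hganal.deriv.differentiableOn
    refine ⟨C * (2 ^ (2*k+2) + 2 * M), by positivity,
      fun z => deriv g z - I1 z * g z,
      hgderiv.sub (hI1diff.mul hgd), ?_, ?_⟩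
    · intro z hz
      set δ := infDist z E with hδdef
      have hδ : 0 < δ := hδpos z hz
      set m := min δ 1 with hmdef
      have hm : 0 < m := lt_min hδ one_pos
      have hmδ : m ≤ δ := min_le_left _ _
      have hm1 : m ≤ 1 := min_le_right _ _
      -- Cauchy estimate on deriv g
      have hball : closedBall z (m/2) ⊆ Eᶜ := by
        intro w hw
        simp only [Set.mem_compl_iff]
        intro hwE
        have : δ ≤ dist z w := infDist_le_dist_of_mem hwE
        rw [dist_comm] at this
        have := mem_closedBall.mp hw
        linarith
      have hgball : DifferentiableOn ℂ g (closedBall z (m/2)) := hgd.mono hball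
      have hcauchy : ‖deriv g z‖ ≤ (C / (m/2)^(2*k)) / (m/2) := by
        apply Complex.norm_deriv_le_of_forall_mem_sphere_norm_le (half_pos hm)
        · apply DifferentiableOn.diffContOnCl
          rwa [closure_ball z (half_pos hm).ne']
        · intro w hw
          have hwball : w ∈ closedBall z (m/2) := sphere_subset_closedBall hw
          have hwE : w ∉ E := hball hwball
          have hlow : m/2 ≤ min (infDist w E) 1 := by
            apply le_min ?_ (by linarith)
            have h2 : δ ≤ infDist w E + dist z w := infDist_le_infDist_add_dist
            have h3 : dist z w ≤ m/2 := by
              rw [dist_comm]; exact mem_closedBall.mp hwball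
            linarith
          calc ‖g w‖ ≤ C / (min (infDist w E) 1)^(2*k) := hgb w hwE
            _ ≤ C / (m/2)^(2*k) := by
                gcongr
      have hd1 : ‖deriv g z‖ ≤ C * 2^(2*k+1) / m^(2*k+1) := by
        have heq : (C / (m/2)^(2*k)) / (m/2) = C * 2^(2*k+1) / m^(2*k+1) := by
          rw [div_div, ← pow_succ, div_pow, div_div_eq_mul_div]
        rwa [heq] at hcauchy
      have hd2 : ‖deriv g z‖ ≤ C * 2^(2*k+2) / m^(2*k+2) := by
        refine hd1.trans ?_
        rw [div_le_div_iff₀ (by positivity) (by positivity)]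
        have h1 : m^(2*k+2) = m^(2*k+1) * m := by ring
        have h2 : (2:ℝ)^(2*k+2) = 2^(2*k+1) * 2 := by ring
        rw [h1, h2]
        have hp : (0:ℝ) ≤ C * 2^(2*k+1) * m^(2*k+1) := by positivity
        nlinarith [pow_nonneg hm.le (2*k+1)]
      have hI1g : ‖I1 z * g z‖ ≤ C * (2 * M) / m^(2*k+2) := by
        rw [norm_mul]
        have b1 : ‖I1 z‖ ≤ 2 * M / m^2 := by
          refine (hI1bound z hz).trans ?_
          gcongr
        have b2 : ‖g z‖ ≤ C / m^(2*k) := by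
          refine (hgb z hz).trans ?_
          exact le_rfl
        calc ‖I1 z‖ * ‖g z‖ ≤ (2 * M / m^2) * (C / m^(2*k)) := by
              apply mul_le_mul b1 b2 (norm_nonneg _) (by positivity)
          _ = C * (2 * M) / m^(2*k+2) := by
              field_simp
              ring
      calc ‖deriv g z - I1 z * g z‖ ≤ ‖deriv g z‖ + ‖I1 z * g z‖ := norm_sub_le _ _
        _ ≤ C * 2^(2*k+2) / m^(2*k+2) + C * (2 * M) / m^(2*k+2) := add_le_add hd2 hI1g
        _ = C * (2^(2*k+2) + 2 * M) / m^(2*(k+1)) := by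
            rw [← add_div]
            ring_nf
    · intro z hz
      have hmem : Eᶜ ∈ nhds z := hopen.mem_nhds hz
      have heq : iteratedDeriv k S =ᶠ[nhds z] fun w => S w * g w :=
        Filter.eventuallyEq_of_mem hmem hrep
      rw [iteratedDeriv_succ, heq.deriv_eq]
      have hgz : HasDerivAt g (deriv g z) z :=
        (hgd.differentiableAt hmem).hasDerivAt
      have hprod : HasDerivAt (fun w => S w * g w)
          (S z * (deriv g z - I1 z * g z)) z := by
        have := (hS z hz).mul hgz
        exact this.congr_deriv (by ring)
      exact hprod.deriv

end SIAux

/-- Derivative bounds for a singular inner function near its singular support: for each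
`k ≥ 1` there is `D_k > 0` with `|S_ν^{(k)}(z)| ≤ D_k δ_E(z)^{−2k}` for `z ∈ 𝕋 \ E`. -/
theorem singularInner_deriv_bound (ν : Measure ℂ) [IsFiniteMeasure ν]
    (E : Set ℂ) (hEclosed : IsClosed E) (hEsub : E ⊆ sphere (0:ℂ) 1)
    (hsupp : ν Eᶜ = 0) :
    ∀ k : ℕ, 0 < k → ∃ D > (0:ℝ), ∀ z ∈ sphere (0:ℂ) 1 \ E,
      ‖iteratedDeriv k (singularInner ν) z‖ ≤ D / (infDist z E) ^ (2 * k) := by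
  intro k hk
  rcases Set.eq_empty_or_nonempty E with hE | hne
  · -- E empty: ν = 0, S ≡ 1, derivatives vanish
    subst hE
    refine ⟨1, one_pos, ?_⟩
    intro z hz
    have hν : ν = 0 := by
      have : ν Set.univ = 0 := by simpa using hsupp
      exact Measure.measure_univ_eq_zero.mp this
    have hSconst : singularInner ν = fun _ => 1 := by
      funext w
      simp [singularInner, hν]
    obtain ⟨j, rfl⟩ : ∃ j, k = j + 1 := ⟨k - 1, (Nat.succ_pred_eq_of_pos hk).symm⟩
    have hzero : iteratedDeriv (j+1) (singularInner ν) = fun _ => 0 := by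
      rw [hSconst, iteratedDeriv_succ']
      simpa [deriv_const'] using SIAux.iteratedDeriv_zero_fun j
    rw [hzero]
    simp [Metric.infDist_empty, zero_pow (by omega : 2 * (j+1) ≠ 0)]
  · -- main case
    have ae_mem : ∀ᵐ ζ ∂ν, ζ ∈ E := by
      rw [MeasureTheory.ae_iff]
      simpa [Set.compl_def] using hsupp
    have hδpos : ∀ z ∉ E, 0 < infDist z E := fun z hz =>
      (hEclosed.notMem_iff_infDist_pos hne).1 hz
    have dist_lower : ∀ {z x ζ : ℂ}, x ∈ Metric.ball z (infDist z E / 2) → ζ ∈ E →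
        infDist z E / 2 ≤ ‖ζ - x‖ := by
      intro z x ζ hx hζ
      have h1 : infDist x E ≤ ‖ζ - x‖ := by
        have := infDist_le_dist_of_mem (x := x) hζ
        rwa [dist_eq_norm, norm_sub_rev] at this
      have h2 : infDist z E ≤ infDist x E + dist z x := infDist_le_infDist_add_dist
      have h3 : dist z x < infDist z E / 2 := by
        rw [dist_comm]; exact mem_ball.mp hx
      linarith
    have dist_lower0 : ∀ {z ζ : ℂ}, z ∉ E → ζ ∈ E → infDist z E ≤ ‖ζ - z‖ := by
      intro z ζ hz hζ
      have := infDist_le_dist_of_mem (x := z) hζ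
      rwa [dist_eq_norm, norm_sub_rev] at this
    have norm_one_of_mem : ∀ {ζ : ℂ}, ζ ∈ E → ‖ζ‖ = 1 := fun hζ => by
      simpa [mem_sphere_zero_iff_norm] using hEsub hζ
    -- integrability
    have hint : ∀ {z : ℂ}, z ∉ E → Integrable (fun ζ : ℂ => (ζ + z) / (ζ - z)) ν := by
      intro z hz
      have hδ := hδpos z hz
      refine Integrable.mono' (integrable_const ((1 + ‖z‖) / infDist z E))
        (((measurable_id.add_const z).div (measurable_id.sub_const z)).aestronglyMeasurable) ?_
      filter_upwards [ae_mem] with ζ hζ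
      rw [norm_div]
      apply div_le_div₀ (by positivity) ?_ hδ (dist_lower0 hz hζ)
      calc ‖ζ + z‖ ≤ ‖ζ‖ + ‖z‖ := norm_add_le _ _
        _ = 1 + ‖z‖ := by rw [norm_one_of_mem hζ]
    -- derivative of the integral
    have hF : ∀ {z : ℂ}, z ∉ E → HasDerivAt (fun x : ℂ => ∫ ζ, (ζ + x) / (ζ - x) ∂ν)
        (∫ ζ, 2 * ζ / (ζ - z) ^ 2 ∂ν) z := by
      intro z hz
      have hδ := hδpos z hz
      have key := hasDerivAt_integral_of_dominated_loc_of_deriv_le (μ := ν)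
        (F := fun (x : ℂ) (ζ : ℂ) => (ζ + x) / (ζ - x))
        (F' := fun (x : ℂ) (ζ : ℂ) => 2 * ζ / (ζ - x) ^ 2)
        (bound := fun _ => 2 / (infDist z E / 2) ^ 2)
        (ball_mem_nhds z (half_pos hδ))
        (Filter.Eventually.of_forall fun x =>
          ((measurable_id.add_const x).div (measurable_id.sub_const x)).aestronglyMeasurable)
        (hint hz)
        ((measurable_id.const_mul 2).div
          ((measurable_id.sub_const z).pow_const 2)).aestronglyMeasurable
        ?_ (integrable_const _) ?_
      · exact key.2
      · filter_upwards [ae_mem] with ζ hζ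
        intro x hx
        have h1 := dist_lower hx hζ
        rw [norm_div, norm_pow]
        apply div_le_div₀ (by positivity) ?_ (by positivity)
          (pow_le_pow_left₀ (by positivity) h1 2)
        rw [norm_mul, norm_one_of_mem hζ]; norm_num
      · filter_upwards [ae_mem] with ζ hζ
        intro x hx
        have h1 := dist_lower hx hζ
        have hne' : ζ - x ≠ 0 := by
          intro h; rw [h, norm_zero] at h1
          have hδ := hδpos z hz
          linarith
        have d1 : HasDerivAt (fun x : ℂ => ζ + x) 1 x := (hasDerivAt_id x).const_add ζ
        have d2 : HasDerivAt (fun x : ℂ => ζ - x) (-1) x := (hasDerivAt_id x).const_sub ζ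
        have := d1.div d2 hne'
        exact this.congr_deriv (by field_simp; ring)
    -- derivative of I1
    set I1 : ℂ → ℂ := fun z => ∫ ζ, 2 * ζ / (ζ - z) ^ 2 ∂ν with hI1def
    have hI1 : ∀ {z : ℂ}, z ∉ E → HasDerivAt I1 (∫ ζ, 4 * ζ / (ζ - z) ^ 3 ∂ν) z := by
      intro z hz
      have hδ := hδpos z hz
      have hintI : Integrable (fun ζ : ℂ => 2 * ζ / (ζ - z) ^ 2) ν := by
        refine Integrable.mono' (integrable_const (2 / (infDist z E) ^ 2))
          (((measurable_id.const_mul 2).div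
            ((measurable_id.sub_const z).pow_const 2)).aestronglyMeasurable) ?_
        filter_upwards [ae_mem] with ζ hζ
        rw [norm_div, norm_pow]
        apply div_le_div₀ (by positivity) ?_ (by positivity)
          (pow_le_pow_left₀ (by positivity) (dist_lower0 hz hζ) 2)
        rw [norm_mul, norm_one_of_mem hζ]; norm_num
      have key := hasDerivAt_integral_of_dominated_loc_of_deriv_le (μ := ν)
        (F := fun (x : ℂ) (ζ : ℂ) => 2 * ζ / (ζ - x) ^ 2)
        (F' := fun (x : ℂ) (ζ : ℂ) => 4 * ζ / (ζ - x) ^ 3)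
        (bound := fun _ => 4 / (infDist z E / 2) ^ 3)
        (ball_mem_nhds z (half_pos hδ))
        (Filter.Eventually.of_forall fun x =>
          ((measurable_id.const_mul 2).div
            ((measurable_id.sub_const x).pow_const 2)).aestronglyMeasurable)
        hintI
        ((measurable_id.const_mul 4).div
          ((measurable_id.sub_const z).pow_const 3)).aestronglyMeasurable
        ?_ (integrable_const _) ?_
      · exact key.2
      · filter_upwards [ae_mem] with ζ hζ
        intro x hx
        have h1 := dist_lower hx hζ
        rw [norm_div, norm_pow]
        apply div_le_div₀ (by positivity) ?_ (by positivity)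
          (pow_le_pow_left₀ (by positivity) h1 3)
        rw [norm_mul, norm_one_of_mem hζ]; norm_num
      · filter_upwards [ae_mem] with ζ hζ
        intro x hx
        have h1 := dist_lower hx hζ
        have hne' : ζ - x ≠ 0 := by
          intro h; rw [h, norm_zero] at h1
          linarith
        have d1 : HasDerivAt (fun _ : ℂ => 2 * ζ) 0 x := hasDerivAt_const x _
        have d2 : HasDerivAt (fun x : ℂ => (ζ - x) ^ 2) (2 * (ζ - x) ^ 1 * (-1)) x :=
          ((hasDerivAt_id x).const_sub ζ).pow 2
        have := d1.div d2 (pow_ne_zero 2 hne')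
        exact this.congr_deriv (by field_simp; ring)
    have hI1diff : DifferentiableOn ℂ I1 Eᶜ := fun z hz =>
      ((hI1 hz).differentiableAt).differentiableWithinAt
    -- bound on I1
    set M : ℝ := (ν Set.univ).toReal with hMdef
    have hM : 0 ≤ M := ENNReal.toReal_nonneg
    have hI1bound : ∀ z ∉ E, ‖I1 z‖ ≤ 2 * M / (infDist z E) ^ 2 := by
      intro z hz
      have hδ := hδpos z hz
      have hb : ∀ᵐ ζ ∂ν, ‖2 * ζ / (ζ - z) ^ 2‖ ≤ 2 / (infDist z E) ^ 2 := by
        filter_upwards [ae_mem] with ζ hζ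
        rw [norm_div, norm_pow]
        apply div_le_div₀ (by positivity) ?_ (by positivity)
          (pow_le_pow_left₀ (by positivity) (dist_lower0 hz hζ) 2)
        rw [norm_mul, norm_one_of_mem hζ]; norm_num
      have := norm_integral_le_of_norm_le (integrable_const (2 / (infDist z E) ^ 2)) hb
      rw [integral_const, smul_eq_mul] at this
      refine this.trans (le_of_eq ?_)
      rw [hMdef, ← measureReal_def]
      field_simp
    -- derivative of S
    have hS : ∀ z ∉ E, HasDerivAt (singularInner ν) (singularInner ν z * -(I1 z)) z := by
      intro z hz
      have := ((hF hz).neg).cexp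
      exact this
    -- key induction
    obtain ⟨C, hC, g, hgd, hgb, hrep⟩ :=
      SIAux.key_induction E hEclosed (singularInner ν) I1 M hM hδpos hS hI1diff hI1bound k
    refine ⟨C * 4 ^ k, by positivity, ?_⟩
    rintro z ⟨hz1, hz2⟩
    have hzn : ‖z‖ = 1 := by simpa [mem_sphere_zero_iff_norm] using hz1
    set δ := infDist z E with hδdef
    have hδ : 0 < δ := hδpos z hz2
    have hδ2 : δ ≤ 2 := by
      obtain ⟨ζ0, hζ0⟩ := hne
      have h1 : δ ≤ dist z ζ0 := infDist_le_dist_of_mem hζ0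
      have h2 : dist z ζ0 ≤ ‖z‖ + ‖ζ0‖ := by
        rw [dist_eq_norm]; exact norm_sub_le _ _
      rw [hzn, norm_one_of_mem hζ0] at h2
      linarith
    -- |S| = 1 on the circle off E
    have hSnorm : ‖singularInner ν z‖ = 1 := by
      have hre : (∫ ζ, (ζ + z) / (ζ - z) ∂ν).re = 0 := by
        rw [← RCLike.re_eq_complex_re, ← integral_re (hint hz2), RCLike.re_eq_complex_re]
        have hae : ∀ᵐ ζ ∂ν, ((ζ + z) / (ζ - z)).re = 0 := by
          filter_upwards [ae_mem] with ζ hζ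
          exact SIAux.re_zero (norm_one_of_mem hζ) hzn (fun h => hz2 (h ▸ hζ))
        exact integral_eq_zero_of_ae hae
      rw [singularInner, Complex.norm_exp, Complex.neg_re, hre]
      simp
    have hmin : δ / 2 ≤ min δ 1 := le_min (by linarith) (by linarith)
    have h4 : (2:ℝ) ^ (2*k) = 4 ^ k := by
      rw [pow_mul]; norm_num
    calc ‖iteratedDeriv k (singularInner ν) z‖ = ‖singularInner ν z * g z‖ := by
          rw [hrep z hz2]
      _ = ‖g z‖ := by rw [norm_mul, hSnorm, one_mul]
      _ ≤ C / (min δ 1) ^ (2*k) := hgb z hz2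
      _ ≤ C / (δ/2) ^ (2*k) := by gcongr
      _ = C * 4 ^ k / δ ^ (2*k) := by
          rw [div_pow, div_div_eq_mul_div, h4]
end
end

section
/- Let 1 < p < ∞ and q = p/(p−1). There is a constant C_p > 0 such that for all f holomorphic on 𝔻 with f, f' ∈ L^p(𝔻, dA) and all g holomorphic on 𝔻 with g ∈ L^q(𝔻, dA), one has sup_{0<r<1} | ∫_𝕋 f(rζ) conj(g(rζ)) dm(ζ) | ≤ C_p (‖f‖_{L^p} + ‖f'‖_{L^p}) ‖g‖_{L^q}. -/
open Metric MeasureTheory Complex Set intervalIntegral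

set_option maxHeartbeats 1000000

noncomputable section

/-- The normalized area measure `dA` on the unit disc `𝔻` (total mass one). -/
noncomputable def discMeasure : Measure ℂ :=
  (ENNReal.ofReal Real.pi)⁻¹ • (volume.restrict (ball (0:ℂ) 1))

/-- The pairing `∫_𝕋 f(rζ) conj(g(rζ)) dm(ζ)` of the dilations of `f` and `g`. -/
noncomputable def circlePairing (f g : ℂ → ℂ) (r : ℝ) : ℂ :=
  (2 * Real.pi)⁻¹ • ∫ θ in (0:ℝ)..(2 * Real.pi),
    f (r * Complex.exp (θ * Complex.I)) *
      (starRingEnd ℂ) (g (r * Complex.exp (θ * Complex.I)))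



/-- Fubini swap for double interval integrals of functions continuous on the rectangle. -/
lemma swap_intervalIntegral {a b c d : ℝ} (hab : a ≤ b) (hcd : c ≤ d) (F : ℝ → ℝ → ℂ)
    (hF : ContinuousOn (Function.uncurry F) (Icc a b ×ˢ Icc c d)) :
    ∫ x in a..b, ∫ y in c..d, F x y = ∫ y in c..d, ∫ x in a..b, F x y := by
  have hInt : IntegrableOn (Function.uncurry F) (Ioc a b ×ˢ Ioc c d) (volume.prod volume) := by
    have := hF.integrableOn_compact (isCompact_Icc.prod isCompact_Icc) (μ := volume.prod volume)
    · exact this.mono_set (prod_mono Ioc_subset_Icc_self Ioc_subset_Icc_self)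
  have hInt' : Integrable (Function.uncurry F)
      ((volume.restrict (Ioc a b)).prod (volume.restrict (Ioc c d))) := by
    rw [Measure.prod_restrict]; exact hInt
  have := MeasureTheory.integral_integral_swap hInt'
  simp only [intervalIntegral.integral_of_le hab, intervalIntegral.integral_of_le hcd]
  exact this
open Metric MeasureTheory Complex Set intervalIntegral

/-- Polar coordinates for an integral over a disc centered at the origin. -/
lemma polar_ball {R : ℝ} (hR : 0 < R) (φ : ℂ → ℂ) (hφ : ContinuousOn φ (closedBall 0 R)) :
    ∫ z in ball (0:ℂ) R, φ z
      = ∫ s in Ioo 0 R, ∫ θ in Ioo (-Real.pi) Real.pi,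
          s • φ (s * Complex.exp (θ * Complex.I)) := by
  have hsymm : ∀ p : ℝ × ℝ, Complex.polarCoord.symm p = (p.1 : ℂ) * Complex.exp (p.2 * Complex.I) := by
    intro p
    rw [Complex.polarCoord_symm_apply, Complex.exp_mul_I]
    push_cast
    ring
  have key := Complex.integral_comp_polarCoord_symm (Set.indicator (ball (0:ℂ) R) φ)
  rw [MeasureTheory.integral_indicator measurableSet_ball] at key
  rw [← key, polarCoord_target]
  have h1 : ∀ p ∈ Set.Ioi (0:ℝ) ×ˢ Set.Ioo (-Real.pi) Real.pi,
      p.1 • (Set.indicator (ball (0:ℂ) R) φ) (Complex.polarCoord.symm p)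
        = (Set.Ioo (0:ℝ) R ×ˢ Set.Ioo (-Real.pi) Real.pi).indicator
            (fun p : ℝ × ℝ => p.1 • φ ((p.1 : ℂ) * Complex.exp (p.2 * Complex.I))) p := by
    rintro ⟨s, θ⟩ ⟨hs, hθ⟩
    simp only [Set.mem_Ioi] at hs
    have habs : ‖(s : ℂ) * Complex.exp (θ * Complex.I)‖ = s := by
      rw [norm_mul, Complex.norm_exp_ofReal_mul_I, Complex.norm_real,
        Real.norm_eq_abs, abs_of_pos hs, mul_one]
    rw [hsymm]
    by_cases hlt : s < R
    · rw [Set.indicator_of_mem, Set.indicator_of_mem]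
      · exact Set.mk_mem_prod ⟨hs, hlt⟩ hθ
      · rw [mem_ball_zero_iff, habs]; exact hlt
    · rw [Set.indicator_of_notMem, Set.indicator_of_notMem, smul_zero]
      · rintro ⟨⟨-, h2⟩, -⟩; exact hlt h2
      · rw [mem_ball_zero_iff, habs]; exact hlt
  rw [setIntegral_congr_fun (measurableSet_Ioi.prod measurableSet_Ioo) h1,
    setIntegral_indicator (measurableSet_Ioo.prod measurableSet_Ioo)]
  have hset : (Set.Ioi (0:ℝ) ×ˢ Set.Ioo (-Real.pi) Real.pi)
      ∩ (Set.Ioo (0:ℝ) R ×ˢ Set.Ioo (-Real.pi) Real.pi)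
      = Set.Ioo (0:ℝ) R ×ˢ Set.Ioo (-Real.pi) Real.pi := by
    rw [Set.prod_inter_prod]
    congr 1
    · exact Set.inter_eq_self_of_subset_right Set.Ioo_subset_Ioi_self
    · exact Set.inter_self _
  rw [hset, Measure.volume_eq_prod, setIntegral_prod]
  have hmaps : Set.MapsTo (fun p : ℝ × ℝ => (p.1 : ℂ) * Complex.exp (p.2 * Complex.I))
      (Set.Icc 0 R ×ˢ Set.Icc (-Real.pi) Real.pi) (closedBall (0:ℂ) R) := by
    rintro ⟨s, θ⟩ ⟨⟨hs0, hsR⟩, -⟩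
    rw [mem_closedBall_zero_iff]
    have h2 : ‖(s : ℂ) * Complex.exp (θ * Complex.I)‖ = |s| := by
      rw [norm_mul, Complex.norm_exp_ofReal_mul_I, Complex.norm_real, Real.norm_eq_abs, mul_one]
    rw [h2, _root_.abs_of_nonneg hs0]
    exact hsR
  have hcont : ContinuousOn (fun p : ℝ × ℝ => p.1 • φ ((p.1 : ℂ) * Complex.exp (p.2 * Complex.I)))
      (Set.Icc 0 R ×ˢ Set.Icc (-Real.pi) Real.pi) := by
    apply ContinuousOn.smul (continuous_fst.continuousOn)
    exact hφ.comp (by fun_prop) hmaps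
  have := (hcont.integrableOn_compact (isCompact_Icc.prod isCompact_Icc)
      (μ := volume.prod volume)).mono_set
      (prod_mono Set.Ioo_subset_Icc_self Set.Ioo_subset_Icc_self)
  exact this
open Metric MeasureTheory Complex Set intervalIntegral

/-- radial derivative of a dilated holomorphic function -/
lemma hasDerivAt_radial {h : ℂ → ℂ} (hd : DifferentiableOn ℂ h (ball (0:ℂ) 1))
    (θ : ℝ) {t : ℝ} (ht : |t| < 1) :
    HasDerivAt (fun t : ℝ => h (↑t * Complex.exp (↑θ * Complex.I)))
      (deriv h (↑t * Complex.exp (↑θ * Complex.I)) * Complex.exp (↑θ * Complex.I)) t := by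
  set e := Complex.exp (↑θ * Complex.I) with he
  have hnorm : ‖(t : ℂ) * e‖ = |t| := by
    rw [norm_mul, he, Complex.norm_exp_ofReal_mul_I, Complex.norm_real, Real.norm_eq_abs, mul_one]
  have hmem : (t : ℂ) * e ∈ ball (0:ℂ) 1 := by rw [mem_ball_zero_iff, hnorm]; exact ht
  have hz : HasDerivAt h (deriv h ((t:ℂ) * e)) ((t:ℂ) * e) :=
    (hd.differentiableAt (isOpen_ball.mem_nhds hmem)).hasDerivAt
  have hin : HasDerivAt (fun w : ℂ => w * e) e (t : ℂ) := hasDerivAt_mul_const e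
  have := (hz.comp (t : ℂ) hin).comp_ofReal
  simpa [Function.comp] using this

/-- angular derivative of a dilated holomorphic function -/
lemma hasDerivAt_angular {h : ℂ → ℂ} (hd : DifferentiableOn ℂ h (ball (0:ℂ) 1))
    {t : ℝ} (ht : |t| < 1) (θ : ℝ) :
    HasDerivAt (fun θ : ℝ => h (↑t * Complex.exp (↑θ * Complex.I)))
      (deriv h (↑t * Complex.exp (↑θ * Complex.I)) *
        (↑t * Complex.exp (↑θ * Complex.I) * Complex.I)) θ := by
  have hnorm : ‖(t : ℂ) * Complex.exp (↑θ * Complex.I)‖ = |t| := by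
    rw [norm_mul, Complex.norm_exp_ofReal_mul_I, Complex.norm_real, Real.norm_eq_abs, mul_one]
  have hmem : (t : ℂ) * Complex.exp (↑θ * Complex.I) ∈ ball (0:ℂ) 1 := by
    rw [mem_ball_zero_iff, hnorm]; exact ht
  have hz : HasDerivAt h (deriv h ((t:ℂ) * Complex.exp (↑θ * Complex.I)))
      ((t:ℂ) * Complex.exp (↑θ * Complex.I)) :=
    (hd.differentiableAt (isOpen_ball.mem_nhds hmem)).hasDerivAt
  have h1 : HasDerivAt (fun w : ℂ => w * Complex.I) Complex.I (θ : ℂ) :=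
    hasDerivAt_mul_const Complex.I
  have h2 : HasDerivAt Complex.exp (Complex.exp ((θ:ℂ) * Complex.I)) ((θ:ℂ) * Complex.I) :=
    Complex.hasDerivAt_exp _
  have h3 : HasDerivAt (fun w : ℂ => Complex.exp (w * Complex.I))
      (Complex.exp ((θ:ℂ) * Complex.I) * Complex.I) (θ : ℂ) := h2.comp (θ:ℂ) h1
  have h4 : HasDerivAt (fun w : ℂ => (t:ℂ) * Complex.exp (w * Complex.I))
      ((t:ℂ) * (Complex.exp ((θ:ℂ) * Complex.I) * Complex.I)) (θ : ℂ) := h3.const_mul _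
  have := (hz.comp (θ:ℂ) h4).comp_ofReal
  simpa [Function.comp, mul_assoc, mul_comm, mul_left_comm] using this

section KeyIdentity

variable {f g : ℂ → ℂ}

/-- The Green-type identity:
`r² ∫_𝕋 f(rζ) conj(g(rζ)) dm = ∫_0^r ∫_𝕋 2t (f + z f')(tζ) conj(g(tζ)) dm dt`. -/
lemma key_identity (hf : DifferentiableOn ℂ f (ball (0:ℂ) 1))
    (hg : DifferentiableOn ℂ g (ball (0:ℂ) 1)) {r : ℝ} (hr0 : 0 < r) (hr1 : r < 1) :
    ((r:ℂ))^2 * ∫ θ in (0:ℝ)..(2*Real.pi),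
        f (↑r * Complex.exp (↑θ * Complex.I)) *
          (starRingEnd ℂ) (g (↑r * Complex.exp (↑θ * Complex.I)))
      = ∫ t in (0:ℝ)..r, ∫ θ in (0:ℝ)..(2*Real.pi),
          2*(t:ℂ) * ((f (↑t * Complex.exp (↑θ * Complex.I))
              + ↑t * Complex.exp (↑θ * Complex.I) * deriv f (↑t * Complex.exp (↑θ * Complex.I)))
            * (starRingEnd ℂ) (g (↑t * Complex.exp (↑θ * Complex.I)))) := by
  set E : ℝ → ℂ := fun θ => Complex.exp (↑θ * Complex.I) with hE
  set u : ℝ → ℝ → ℂ := fun t θ => f (↑t * E θ) * (starRingEnd ℂ) (g (↑t * E θ)) with hu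
  set W : ℝ → ℝ → ℂ := fun t θ =>
    (f (↑t * E θ) + ↑t * E θ * deriv f (↑t * E θ)) * (starRingEnd ℂ) (g (↑t * E θ)) with hW
  set dθu : ℝ → ℝ → ℂ := fun t θ =>
    deriv f (↑t * E θ) * (↑t * E θ * Complex.I) * (starRingEnd ℂ) (g (↑t * E θ))
      + f (↑t * E θ) * (starRingEnd ℂ) (deriv g (↑t * E θ) * (↑t * E θ * Complex.I)) with hdθu
  set V : ℝ → ℝ → ℂ := fun (t θ : ℝ) => 2*(t:ℂ) * W t θ + (Complex.I * ↑t) * dθu t θ with hV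
  -- basic facts
  have hfd : ContinuousOn (deriv f) (ball (0:ℂ) 1) :=
    ((hf.analyticOnNhd isOpen_ball).deriv).continuousOn
  have hgd : ContinuousOn (deriv g) (ball (0:ℂ) 1) :=
    ((hg.analyticOnNhd isOpen_ball).deriv).continuousOn
  have hfc : ContinuousOn f (ball (0:ℂ) 1) := hf.continuousOn
  have hgc : ContinuousOn g (ball (0:ℂ) 1) := hg.continuousOn
  have hnorm : ∀ (t θ : ℝ), ‖(t : ℂ) * E θ‖ = |t| := by
    intro t θ
    rw [norm_mul, hE, Complex.norm_exp_ofReal_mul_I, Complex.norm_real, Real.norm_eq_abs, mul_one]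
  -- θ-derivative of u
  have huθ : ∀ {t : ℝ}, |t| < 1 → ∀ θ : ℝ, HasDerivAt (fun θ => u t θ) (dθu t θ) θ := by
    intro t ht θ
    have h1 := hasDerivAt_angular hf ht θ
    have h2 := (hasDerivAt_angular hg ht θ).star
    exact (h1.mul h2)
  -- t-derivative of t ↦ t² u t θ
  have hut : ∀ (θ : ℝ) {t : ℝ}, |t| < 1 →
      HasDerivAt (fun t : ℝ => ((t:ℂ))^2 * u t θ) (V t θ) t := by
    intro θ t ht
    have h1 := hasDerivAt_radial hf θ ht
    have h2 := (hasDerivAt_radial hg θ ht).star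
    have hsq : HasDerivAt (fun t : ℝ => ((t:ℂ))^2) (2*(t:ℂ)) t := by
      have := ((hasDerivAt_pow 2 ((t:ℂ))).comp_ofReal)
      simpa using this
    have := hsq.mul (h1.mul h2)
    simp only [Pi.mul_def] at this
    refine this.congr_deriv ?_
    simp only [hV, hW, hdθu, hu]
    simp only [map_mul, Complex.conj_I, Complex.conj_ofReal, RCLike.star_def, hE]
    ring_nf
    simp only [Complex.I_sq]
    ring
  -- continuity of the various integrands
  have hcmap : Continuous fun p : ℝ × ℝ => (↑p.1 * E p.2 : ℂ) := by
    apply continuous_ofReal.fst'.mul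
    exact (Complex.continuous_exp.comp ((continuous_ofReal.snd').mul continuous_const))
  have hmaps : ∀ {s : ℝ}, s < 1 → MapsTo (fun p : ℝ × ℝ => (↑p.1 * E p.2 : ℂ))
      (Icc (-s) s ×ˢ univ) (ball (0:ℂ) 1) := by
    intro s hs
    rintro ⟨t, θ⟩ ⟨⟨h1, h2⟩, -⟩
    rw [mem_ball_zero_iff, hnorm]
    exact lt_of_le_of_lt (abs_le.2 ⟨h1, h2⟩) hs
  have he' : ∀ {S : Set (ℝ × ℝ)}, ContinuousOn (fun p : ℝ × ℝ => ((p.1 : ℝ) : ℂ)) S :=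
    continuous_ofReal.fst'.continuousOn
  have hE' : ∀ {S : Set (ℝ × ℝ)}, ContinuousOn (fun p : ℝ × ℝ => E p.2) S := by
    intro S
    exact (Complex.continuous_exp.comp ((continuous_ofReal.snd').mul continuous_const)).continuousOn
  have hVcont : ContinuousOn (Function.uncurry V) (Icc 0 r ×ˢ Icc 0 (2*Real.pi)) := by
    have hsub : (Icc (0:ℝ) r ×ˢ Icc 0 (2*Real.pi)) ⊆ Icc (-r) r ×ˢ univ := by
      rintro ⟨t, θ⟩ ⟨⟨h1, h2⟩, -⟩
      exact ⟨⟨le_trans (by linarith) h1, h2⟩, trivial⟩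
    apply ContinuousOn.mono _ hsub
    have hb : ∀ {F : ℂ → ℂ}, ContinuousOn F (ball (0:ℂ) 1) →
        ContinuousOn (fun p : ℝ × ℝ => F (↑p.1 * E p.2)) (Icc (-r) r ×ˢ univ) := fun hF =>
      hF.comp (continuous_ofReal.fst'.mul
        (Complex.continuous_exp.comp ((continuous_ofReal.snd').mul
          continuous_const))).continuousOn (hmaps hr1)
    have h1 := hb hfc
    have h2 := hb hgc
    have h3 := hb hfd
    have h4 := hb hgd
    have hVeq : Function.uncurry V = fun p : ℝ × ℝ =>
        2*((p.1:ℝ):ℂ) * ((f (↑p.1 * E p.2) + ↑p.1 * E p.2 * deriv f (↑p.1 * E p.2))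
            * star (g (↑p.1 * E p.2)))
          + (Complex.I * ↑p.1) * (deriv f (↑p.1 * E p.2) * (↑p.1 * E p.2 * Complex.I)
              * star (g (↑p.1 * E p.2))
            + f (↑p.1 * E p.2) * star (deriv g (↑p.1 * E p.2) * (↑p.1 * E p.2 * Complex.I))) := by
      funext p
      simp only [Function.uncurry, hV, hW, hdθu, RCLike.star_def]
    rw [hVeq]
    exact ((continuousOn_const.mul he').mul
        ((h1.add ((he'.mul hE').mul h3)).mul h2.star)).add
      ((continuousOn_const.mul he').mul
        (((h3.mul ((he'.mul hE').mul continuousOn_const)).mul h2.star).add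
          (h1.mul ((h4.mul ((he'.mul hE').mul continuousOn_const)).star))))
  -- continuity of the W-part and the dθu-part separately
  have hb' : ∀ {F : ℂ → ℂ}, ContinuousOn F (ball (0:ℂ) 1) →
      ContinuousOn (fun p : ℝ × ℝ => F (↑p.1 * E p.2)) (Icc (-r) r ×ˢ univ) := fun hF =>
    hF.comp (continuous_ofReal.fst'.mul
      (Complex.continuous_exp.comp ((continuous_ofReal.snd').mul
        continuous_const))).continuousOn (hmaps hr1)
  have hsub : (Icc (0:ℝ) r ×ˢ Icc 0 (2*Real.pi)) ⊆ Icc (-r) r ×ˢ univ := by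
    rintro ⟨t, θ⟩ ⟨⟨h1, h2⟩, -⟩
    exact ⟨⟨le_trans (by linarith) h1, h2⟩, trivial⟩
  have hWcont : ContinuousOn (Function.uncurry (fun (t θ : ℝ) => 2*(t:ℂ) * W t θ))
      (Icc 0 r ×ˢ Icc 0 (2*Real.pi)) := by
    apply ContinuousOn.mono _ hsub
    have hWeq : Function.uncurry (fun (t θ : ℝ) => 2*(t:ℂ) * W t θ) = fun p : ℝ × ℝ =>
        2*((p.1:ℝ):ℂ) * ((f (↑p.1 * E p.2) + ↑p.1 * E p.2 * deriv f (↑p.1 * E p.2))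
            * star (g (↑p.1 * E p.2))) := by
      funext p
      simp only [Function.uncurry, hW, RCLike.star_def]
    rw [hWeq]
    exact (continuousOn_const.mul he').mul
      (((hb' hfc).add ((he'.mul hE').mul (hb' hfd))).mul (hb' hgc).star)
  have hDcont : ContinuousOn (Function.uncurry dθu) (Icc 0 r ×ˢ Icc 0 (2*Real.pi)) := by
    apply ContinuousOn.mono _ hsub
    have hDeq : Function.uncurry dθu = fun p : ℝ × ℝ =>
        deriv f (↑p.1 * E p.2) * (↑p.1 * E p.2 * Complex.I) * star (g (↑p.1 * E p.2))
          + f (↑p.1 * E p.2) * star (deriv g (↑p.1 * E p.2) * (↑p.1 * E p.2 * Complex.I)) := by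
      funext p
      simp only [Function.uncurry, hdθu, RCLike.star_def]
    rw [hDeq]
    exact (((hb' hfd).mul ((he'.mul hE').mul continuousOn_const)).mul (hb' hgc).star).add
      ((hb' hfc).mul (((hb' hgd).mul ((he'.mul hE').mul continuousOn_const)).star))
  have h2pi : (0:ℝ) ≤ 2*Real.pi := by positivity
  -- FTC in t, for every θ
  have hFTCt : ∀ θ : ℝ, θ ∈ Set.Icc 0 (2*Real.pi) →
      ∫ t in (0:ℝ)..r, V t θ = ((r:ℂ))^2 * u r θ := by
    intro θ hθ
    have hderiv : ∀ t ∈ uIcc (0:ℝ) r, HasDerivAt (fun t : ℝ => ((t:ℂ))^2 * u t θ) (V t θ) t := by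
      intro t htmem
      rw [uIcc_of_le hr0.le] at htmem
      refine hut θ ?_
      rw [_root_.abs_of_nonneg htmem.1]
      exact lt_of_le_of_lt htmem.2 hr1
    have hint : IntervalIntegrable (fun t => V t θ) volume 0 r := by
      apply ContinuousOn.intervalIntegrable
      rw [uIcc_of_le hr0.le]
      have : ContinuousOn (fun t : ℝ => Function.uncurry V (t, θ)) (Icc 0 r) :=
        hVcont.comp (Continuous.continuousOn (by fun_prop))
          (fun t htm => Set.mk_mem_prod htm hθ)
      exact this
    have := intervalIntegral.integral_eq_sub_of_hasDerivAt hderiv hint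
    rw [this]
    norm_num
  -- FTC in θ : the dθu part integrates to zero
  have hE2pi : E (2*Real.pi) = E 0 := by
    simp only [hE]
    push_cast
    rw [Complex.exp_two_pi_mul_I]
    norm_num
  have hDzero : ∀ t : ℝ, t ∈ Set.Icc (0:ℝ) r →
      ∫ θ in (0:ℝ)..(2*Real.pi), dθu t θ = 0 := by
    intro t htm
    have ht1 : |t| < 1 := by
      rw [_root_.abs_of_nonneg htm.1]
      exact lt_of_le_of_lt htm.2 hr1
    have hint : IntervalIntegrable (fun θ => dθu t θ) volume 0 (2*Real.pi) := by
      apply ContinuousOn.intervalIntegrable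
      rw [uIcc_of_le h2pi]
      have : ContinuousOn (fun θ : ℝ => Function.uncurry dθu (t, θ)) (Icc 0 (2*Real.pi)) :=
        hDcont.comp (Continuous.continuousOn (by fun_prop))
          (fun θ hθm => Set.mk_mem_prod htm hθm)
      exact this
    have := intervalIntegral.integral_eq_sub_of_hasDerivAt
      (f := fun θ => u t θ) (fun θ _ => huθ ht1 θ) hint
    rw [this, hu]
    simp only [hE2pi]
    ring
  -- assemble
  calc ((r:ℂ))^2 * ∫ θ in (0:ℝ)..(2*Real.pi),
        f (↑r * Complex.exp (↑θ * Complex.I)) *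
          (starRingEnd ℂ) (g (↑r * Complex.exp (↑θ * Complex.I)))
      = ∫ θ in (0:ℝ)..(2*Real.pi), ((r:ℂ))^2 * u r θ := by
        rw [intervalIntegral.integral_const_mul]
    _ = ∫ θ in (0:ℝ)..(2*Real.pi), ∫ t in (0:ℝ)..r, V t θ := by
        apply intervalIntegral.integral_congr
        intro θ hθ
        rw [uIcc_of_le h2pi] at hθ
        exact (hFTCt θ hθ).symm
    _ = ∫ t in (0:ℝ)..r, ∫ θ in (0:ℝ)..(2*Real.pi), V t θ := by
        have := swap_intervalIntegral h2pi hr0.le (fun θ t => V t θ) ?_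
        · exact this
        · have : ContinuousOn ((Function.uncurry V) ∘ Prod.swap)
              (Icc 0 (2*Real.pi) ×ˢ Icc 0 r) := by
            apply hVcont.comp continuous_swap.continuousOn
            rintro ⟨θ, t⟩ ⟨h1, h2⟩
            exact Set.mk_mem_prod h2 h1
          exact this
    _ = ∫ t in (0:ℝ)..r, ∫ θ in (0:ℝ)..(2*Real.pi), 2*(t:ℂ) * W t θ := by
        apply intervalIntegral.integral_congr
        intro t htm
        rw [uIcc_of_le hr0.le] at htm
        have hWint : IntervalIntegrable (fun θ => 2*(t:ℂ) * W t θ) volume 0 (2*Real.pi) := by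
          apply ContinuousOn.intervalIntegrable
          rw [uIcc_of_le h2pi]
          have : ContinuousOn
              (fun θ : ℝ => Function.uncurry (fun (t θ : ℝ) => 2*(t:ℂ) * W t θ) (t, θ))
              (Icc 0 (2*Real.pi)) :=
            hWcont.comp (Continuous.continuousOn (by fun_prop))
              (fun θ hθm => Set.mk_mem_prod htm hθm)
          exact this
        have hDint : IntervalIntegrable (fun θ => (Complex.I * ↑t) * dθu t θ) volume 0
            (2*Real.pi) := by
          apply ContinuousOn.intervalIntegrable
          rw [uIcc_of_le h2pi]
          have h0 : ContinuousOn (fun θ : ℝ => Function.uncurry dθu (t, θ))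
              (Icc 0 (2*Real.pi)) :=
            hDcont.comp (Continuous.continuousOn (by fun_prop))
              (fun θ hθm => Set.mk_mem_prod htm hθm)
          exact continuousOn_const.mul h0
        show (∫ θ in (0:ℝ)..(2*Real.pi), V t θ)
          = ∫ θ in (0:ℝ)..(2*Real.pi), 2*(t:ℂ) * W t θ
        simp only [hV]
        rw [intervalIntegral.integral_add hWint hDint]
        simp only [intervalIntegral.integral_const_mul]
        rw [hDzero t htm, mul_zero, add_zero]
    _ = _ := rfl

end KeyIdentity

/-- Norm identity expressing the circle pairing as a Bergman-type integral over the disc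
of radius `r`. -/
lemma pairing_norm_eq (hf : DifferentiableOn ℂ f (ball (0:ℂ) 1))
    (hg : DifferentiableOn ℂ g (ball (0:ℂ) 1)) {r : ℝ} (hr0 : 0 < r) (hr1 : r < 1) :
    ‖circlePairing f g r‖ = (Real.pi * r^2)⁻¹ *
      ‖∫ z in ball (0:ℂ) r, (f z + z * deriv f z) * (starRingEnd ℂ) (g z)‖ := by
  have pi_pos := Real.pi_pos
  set Φ : ℂ → ℂ := fun z => (f z + z * deriv f z) * (starRingEnd ℂ) (g z) with hΦ
  have hfd : ContinuousOn (deriv f) (ball (0:ℂ) 1) :=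
    ((hf.analyticOnNhd isOpen_ball).deriv).continuousOn
  have hsubB : closedBall (0:ℂ) r ⊆ ball (0:ℂ) 1 := closedBall_subset_ball hr1
  have hΦc : ContinuousOn Φ (closedBall (0:ℂ) r) := by
    apply ContinuousOn.mul
    · exact (hf.continuousOn.mono hsubB).add
        (continuous_id.continuousOn.mul (hfd.mono hsubB))
    · exact (hg.continuousOn.mono hsubB).star
  -- polar coordinates
  have hpolar := polar_ball hr0 Φ hΦc
  -- transform the inner integral to `0..2π`
  have hper : ∀ s : ℝ, Function.Periodic
      (fun θ : ℝ => s • Φ ((s:ℂ) * Complex.exp ((θ:ℝ) * Complex.I))) (2*Real.pi) := by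
    intro s θ
    show s • Φ ((s:ℂ) * Complex.exp (((θ + 2*Real.pi : ℝ)) * Complex.I))
      = s • Φ ((s:ℂ) * Complex.exp ((θ:ℝ) * Complex.I))
    have : ((θ + 2*Real.pi : ℝ) : ℂ) * Complex.I = (θ:ℝ) * Complex.I + 2*Real.pi*Complex.I := by
      push_cast; ring
    rw [this, Complex.exp_add, Complex.exp_two_pi_mul_I, mul_one]
  have hinner : ∀ s : ℝ, (∫ θ in Ioo (-Real.pi) Real.pi,
      s • Φ ((s:ℂ) * Complex.exp ((θ:ℝ) * Complex.I)))
      = ∫ θ in (0:ℝ)..(2*Real.pi), s • Φ ((s:ℂ) * Complex.exp ((θ:ℝ) * Complex.I)) := by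
    intro s
    rw [← integral_Ioc_eq_integral_Ioo,
      ← intervalIntegral.integral_of_le (by linarith : -Real.pi ≤ Real.pi)]
    have h1 := (hper s).intervalIntegral_add_eq (-Real.pi) 0
    rw [zero_add] at h1
    rw [(by ring : -Real.pi + 2*Real.pi = Real.pi)] at h1
    exact h1
  -- convert outer to interval integral
  have houter : (∫ z in ball (0:ℂ) r, Φ z)
      = ∫ t in (0:ℝ)..r, ∫ θ in (0:ℝ)..(2*Real.pi),
          (t:ℂ) * Φ ((t:ℂ) * Complex.exp ((θ:ℝ) * Complex.I)) := by
    rw [hpolar, ← integral_Ioc_eq_integral_Ioo,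
      ← intervalIntegral.integral_of_le hr0.le]
    apply intervalIntegral.integral_congr
    intro t _
    beta_reduce
    rw [hinner t]
    apply intervalIntegral.integral_congr
    intro θ _
    beta_reduce
    rw [Complex.real_smul]
  -- use the key identity
  have key := key_identity hf hg hr0 hr1
  have hdouble : (∫ t in (0:ℝ)..r, ∫ θ in (0:ℝ)..(2*Real.pi),
        2*(t:ℂ) * ((f (↑t * Complex.exp (↑θ * Complex.I))
            + ↑t * Complex.exp (↑θ * Complex.I) * deriv f (↑t * Complex.exp (↑θ * Complex.I)))
          * (starRingEnd ℂ) (g (↑t * Complex.exp (↑θ * Complex.I)))))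
      = 2 * ∫ z in ball (0:ℂ) r, Φ z := by
    rw [houter, ← intervalIntegral.integral_const_mul]
    apply intervalIntegral.integral_congr
    intro t _
    beta_reduce
    rw [← intervalIntegral.integral_const_mul]
    apply intervalIntegral.integral_congr
    intro θ _
    beta_reduce
    simp only [hΦ]
    ring
  rw [hdouble] at key
  -- now take norms
  have hrne : ((r:ℂ))^2 ≠ 0 := pow_ne_zero 2 (Complex.ofReal_ne_zero.mpr hr0.ne')
  have hJ : ‖∫ θ in (0:ℝ)..(2*Real.pi),
      f (↑r * Complex.exp (↑θ * Complex.I)) *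
        (starRingEnd ℂ) (g (↑r * Complex.exp (↑θ * Complex.I)))‖
      = 2 * ‖∫ z in ball (0:ℂ) r, Φ z‖ / r^2 := by
    have := congrArg norm key
    rw [norm_mul, norm_mul] at this
    have hnr : ‖((r:ℂ))^2‖ = r^2 := by
      rw [norm_pow, Complex.norm_real, Real.norm_eq_abs, _root_.abs_of_pos hr0]
    rw [hnr] at this
    have h2 : ‖(2:ℂ)‖ = 2 := by norm_num
    rw [h2] at this
    rw [eq_div_iff (by positivity)]
    linarith [this]
  rw [circlePairing, norm_smul, hJ]
  rw [Real.norm_eq_abs, abs_of_pos (by positivity : (0:ℝ) < (2*Real.pi)⁻¹)]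
  field_simp

/-- Mean value bound: a holomorphic function on the disc is bounded on the half-disc by its
`L¹` norm on the disc. -/
lemma disc_mean_value {h : ℂ → ℂ} (hd : DifferentiableOn ℂ h (ball (0:ℂ) 1))
    (hint : IntegrableOn h (ball (0:ℂ) 1) volume) {w : ℂ} (hw : ‖w‖ ≤ 1/2) :
    ‖h w‖ ≤ (16/Real.pi) * ∫ z in ball (0:ℂ) 1, ‖h z‖ := by
  have pi_pos := Real.pi_pos
  -- the small ball around w sits inside the unit ball
  have hball : ball w (1/4 : ℝ) ⊆ ball (0:ℂ) 1 := by
    intro z hz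
    rw [mem_ball_zero_iff]
    calc ‖z‖ = ‖(z - w) + w‖ := by ring_nf
      _ ≤ ‖z - w‖ + ‖w‖ := norm_add_le _ _
      _ < 1/4 + 1/2 + 1/4 := by
          rw [mem_ball, dist_eq_norm] at hz
          linarith
      _ ≤ 1 := by norm_num
  have hcball : ∀ {s : ℝ}, s ≤ 1/4 → closedBall w s ⊆ ball (0:ℂ) 1 := by
    intro s hs z hz
    rw [mem_closedBall, dist_eq_norm] at hz
    rw [mem_ball_zero_iff]
    calc ‖z‖ = ‖(z - w) + w‖ := by ring_nf
      _ ≤ ‖z - w‖ + ‖w‖ := norm_add_le _ _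
      _ ≤ 1/4 + 1/2 := by linarith
      _ < 1 := by norm_num
  -- circle mean value property
  have hca : ∀ {s : ℝ}, 0 < s → s ≤ 1/4 →
      (∫ θ in (0:ℝ)..(2*Real.pi), h (w + s * Complex.exp (θ * Complex.I)))
        = (2*Real.pi : ℝ) • h w := by
    intro s hs0 hs1
    have hc : ContinuousOn h (closedBall w s) := hd.continuousOn.mono (hcball hs1)
    have hdd : ∀ z ∈ ball w s \ (∅ : Set ℂ), DifferentiableAt ℂ h z := by
      intro z hz
      exact hd.differentiableAt (isOpen_ball.mem_nhds (hball (ball_subset_ball hs1 hz.1)))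
    have := circleIntegral_sub_center_inv_smul_of_differentiable_on_off_countable hs0
      countable_empty hc hdd
    rw [circleIntegral] at this
    have heq : ∀ θ : ℝ, deriv (circleMap w s) θ • ((circleMap w s θ - w)⁻¹ • h (circleMap w s θ))
        = Complex.I • h (w + s * Complex.exp (θ * Complex.I)) := by
      intro θ
      rw [deriv_circleMap, circleMap_sub_center, smul_smul]
      have hne : circleMap 0 s θ ≠ 0 := by
        simp only [circleMap, zero_add]
        exact mul_ne_zero (Complex.ofReal_ne_zero.mpr hs0.ne') (Complex.exp_ne_zero _)
      rw [mul_comm (circleMap 0 s θ) Complex.I, mul_assoc, mul_inv_cancel₀ hne, mul_one]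
      congr 1
    simp_rw [heq] at this
    rw [intervalIntegral.integral_smul] at this
    have hIne : (Complex.I : ℂ) ≠ 0 := Complex.I_ne_zero
    have h2 : (2 * ↑Real.pi * Complex.I : ℂ) • h w
        = Complex.I • ((2*Real.pi : ℝ) • h w) := by
      simp only [smul_eq_mul, Complex.real_smul]
      push_cast
      ring
    rw [h2] at this
    exact smul_right_injective ℂ hIne this
  -- disc mean value via polar coordinates
  have htrans : ∫ z in ball w (1/4 : ℝ), h z = ∫ z in ball (0:ℂ) (1/4 : ℝ), h (w + z) := by
    rw [← MeasureTheory.integral_indicator measurableSet_ball,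
      ← MeasureTheory.integral_indicator measurableSet_ball]
    rw [← integral_add_left_eq_self (fun z => (ball w (1/4:ℝ)).indicator h z) w]
    apply MeasureTheory.integral_congr_ae
    apply Filter.Eventually.of_forall
    intro z
    beta_reduce
    by_cases hz : z ∈ ball (0:ℂ) (1/4:ℝ)
    · have hmem : w + z ∈ ball w (1/4:ℝ) := by
        rw [mem_ball, dist_eq_norm, add_sub_cancel_left]
        exact mem_ball_zero_iff.mp hz
      rw [Set.indicator_of_mem hmem h, Set.indicator_of_mem hz]
    · have hmem : w + z ∉ ball w (1/4:ℝ) := by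
        rw [mem_ball, dist_eq_norm, add_sub_cancel_left]
        intro hc
        exact hz (mem_ball_zero_iff.mpr hc)
      rw [Set.indicator_of_notMem hmem h, Set.indicator_of_notMem hz]
  have hφc : ContinuousOn (fun z => h (w + z)) (closedBall (0:ℂ) (1/4:ℝ)) := by
    apply (hd.continuousOn.mono (hcball le_rfl)).comp (by fun_prop)
    intro z hz
    rw [mem_closedBall] at hz ⊢
    simpa [dist_eq_norm] using hz
  have hpolar := polar_ball (by norm_num : (0:ℝ) < 1/4) (fun z => h (w + z)) hφc
  -- periodicity: convert inner integral
  have hper : ∀ s : ℝ, Function.Periodic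
      (fun θ : ℝ => s • h (w + (s:ℂ) * Complex.exp ((θ:ℝ) * Complex.I))) (2*Real.pi) := by
    intro s θ
    show s • h (w + (s:ℂ) * Complex.exp (((θ + 2*Real.pi : ℝ)) * Complex.I))
      = s • h (w + (s:ℂ) * Complex.exp ((θ:ℝ) * Complex.I))
    have : ((θ + 2*Real.pi : ℝ) : ℂ) * Complex.I = (θ:ℝ) * Complex.I + 2*Real.pi*Complex.I := by
      push_cast; ring
    rw [this, Complex.exp_add, Complex.exp_two_pi_mul_I, mul_one]
  have hdisc : ∫ z in ball w (1/4:ℝ), h z = (Real.pi/16 : ℝ) • h w := by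
    rw [htrans, hpolar]
    have hinner : ∀ s ∈ Ioo (0:ℝ) (1/4:ℝ), (∫ θ in Ioo (-Real.pi) Real.pi,
        s • h (w + (s:ℂ) * Complex.exp ((θ:ℝ) * Complex.I)))
        = (s * (2*Real.pi)) • h w := by
      intro s hs
      rw [← integral_Ioc_eq_integral_Ioo,
        ← intervalIntegral.integral_of_le (by linarith : -Real.pi ≤ Real.pi)]
      have h1 := (hper s).intervalIntegral_add_eq (-Real.pi) 0
      rw [zero_add] at h1
      rw [(by ring : -Real.pi + 2*Real.pi = Real.pi)] at h1
      rw [h1, intervalIntegral.integral_smul, hca hs.1 hs.2.le, smul_smul]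
    rw [setIntegral_congr_fun measurableSet_Ioo hinner]
    rw [_root_.integral_smul_const]
    congr 1
    rw [← integral_Ioc_eq_integral_Ioo, ← intervalIntegral.integral_of_le (by norm_num : (0:ℝ) ≤ 1/4)]
    have : ∫ s in (0:ℝ)..(1/4:ℝ), s * (2*Real.pi) = ((1/4:ℝ)^2 - 0^2)/2 * (2*Real.pi) := by
      rw [intervalIntegral.integral_mul_const, integral_id]
    rw [this]
    ring
  -- conclude
  have hw' : h w = (16/Real.pi : ℝ) • ∫ z in ball w (1/4:ℝ), h z := by
    rw [hdisc, smul_smul]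
    rw [show (16/Real.pi) * (Real.pi/16) = 1 by field_simp]
    rw [one_smul]
  rw [hw', norm_smul, Real.norm_eq_abs, abs_of_pos (by positivity : (0:ℝ) < 16/Real.pi)]
  have hb1 : ‖∫ z in ball w (1/4:ℝ), h z‖ ≤ ∫ z in ball w (1/4:ℝ), ‖h z‖ :=
    norm_integral_le_integral_norm _
  have hb2 : (∫ z in ball w (1/4:ℝ), ‖h z‖) ≤ ∫ z in ball (0:ℂ) 1, ‖h z‖ := by
    apply setIntegral_mono_set hint.norm
    · exact Filter.Eventually.of_forall (fun z => norm_nonneg _)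
    · exact HasSubset.Subset.eventuallyLE hball
  have := mul_le_mul_of_nonneg_left (le_trans hb1 hb2) (by positivity : (0:ℝ) ≤ 16/Real.pi)
  exact this

/-- The Cauchy `H²`-pairing with a Bergman `L^q_a` function induces a bounded linear
functional on the analytic Sobolev space `W^{1,p}_a`, `1 < p < ∞`, `q = p/(p−1)`. -/
theorem sobolev_bergman_pairing_bound (p q : ℝ) (hp : 1 < p) (hq : q = p / (p - 1)) :
    ∃ C > (0:ℝ), ∀ f g : ℂ → ℂ,
      DifferentiableOn ℂ f (ball (0:ℂ) 1) →
      MemLp f (ENNReal.ofReal p) discMeasure →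
      MemLp (deriv f) (ENNReal.ofReal p) discMeasure →
      DifferentiableOn ℂ g (ball (0:ℂ) 1) →
      MemLp g (ENNReal.ofReal q) discMeasure →
      ∀ r : ℝ, 0 < r → r < 1 →
        ‖circlePairing f g r‖ ≤
          C * ((eLpNorm f (ENNReal.ofReal p) discMeasure).toReal +
               (eLpNorm (deriv f) (ENNReal.ofReal p) discMeasure).toReal) *
            (eLpNorm g (ENNReal.ofReal q) discMeasure).toReal := by
  have pi_pos := Real.pi_pos
  refine ⟨256, by norm_num, ?_⟩
  intro f g hf hf2 hf3 hg hg2 r hr0 hr1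
  have hπ0 : (ENNReal.ofReal Real.pi) ≠ 0 := ne_of_gt (ENNReal.ofReal_pos.mpr pi_pos)
  have hπt : (ENNReal.ofReal Real.pi) ≠ ⊤ := ENNReal.ofReal_ne_top
  have hrestrict : volume.restrict (ball (0:ℂ) 1) = (ENNReal.ofReal Real.pi) • discMeasure := by
    rw [discMeasure, smul_smul, ENNReal.mul_inv_cancel hπ0 hπt, one_smul]
  have hv1 : volume (ball (0:ℂ) 1) = ENNReal.ofReal Real.pi := by
    rw [Complex.volume_ball]
    simp [← NNReal.coe_real_pi, ENNReal.ofReal_coe_nnreal]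
  haveI hprob : IsProbabilityMeasure discMeasure := by
    constructor
    rw [discMeasure, Measure.smul_apply, Measure.restrict_apply_univ, hv1, smul_eq_mul,
      ENNReal.inv_mul_cancel hπ0 hπt]
  -- exponents
  have hp0 : 0 < p := lt_trans one_pos hp
  have hpq : p.HolderConjugate q := hq ▸ Real.HolderConjugate.conjExponent hp
  have hq0 : 0 < q := hpq.symm.pos
  set P := ENNReal.ofReal p with hPdef
  set Q := ENNReal.ofReal q with hQdef
  have hP0 : P ≠ 0 := ne_of_gt (ENNReal.ofReal_pos.mpr hp0)
  have hPt : P ≠ ⊤ := ENNReal.ofReal_ne_top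
  have hQ0 : Q ≠ 0 := ne_of_gt (ENNReal.ofReal_pos.mpr hq0)
  have hQt : Q ≠ ⊤ := ENNReal.ofReal_ne_top
  have hP1 : 1 ≤ P := ENNReal.one_le_ofReal.mpr hp.le
  have hQ1 : 1 ≤ Q := ENNReal.one_le_ofReal.mpr hpq.symm.lt.le
  set μ := discMeasure with hμ
  set Nf := (eLpNorm f P μ).toReal with hNfdef
  set Nf' := (eLpNorm (deriv f) P μ).toReal with hNf'def
  set Ng := (eLpNorm g Q μ).toReal with hNgdef
  have hNfnn : 0 ≤ Nf := ENNReal.toReal_nonneg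
  have hNf'nn : 0 ≤ Nf' := ENNReal.toReal_nonneg
  have hNgnn : 0 ≤ Ng := ENNReal.toReal_nonneg
  -- a.e. membership in the ball
  have hae : ∀ᵐ z ∂μ, z ∈ ball (0:ℂ) 1 := by
    rw [hμ, discMeasure]
    exact Measure.ae_smul_measure (ae_restrict_mem measurableSet_ball) _
  -- the Sobolev combination F
  set F : ℂ → ℂ := fun z => f z + z * deriv f z with hFdef
  have hmulmeas : AEStronglyMeasurable (fun z => z * deriv f z) μ :=
    aestronglyMeasurable_id.mul hf3.1
  have hmulbound : ∀ᵐ z ∂μ, ‖z * deriv f z‖ ≤ ‖deriv f z‖ := by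
    filter_upwards [hae] with z hz
    rw [norm_mul]
    exact mul_le_of_le_one_left (norm_nonneg _) (le_of_lt (mem_ball_zero_iff.mp hz))
  have hmul : MemLp (fun z => z * deriv f z) P μ := hf3.of_le hmulmeas hmulbound
  have hFmem : MemLp F P μ := hf2.add hmul
  have hNF : (eLpNorm F P μ).toReal ≤ Nf + Nf' := by
    have h1 : eLpNorm F P μ ≤ eLpNorm f P μ + eLpNorm (fun z => z * deriv f z) P μ :=
      eLpNorm_add_le hf2.1 hmulmeas hP1
    have h2 : eLpNorm (fun z => z * deriv f z) P μ ≤ eLpNorm (deriv f) P μ :=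
      eLpNorm_mono_ae hmulbound
    have h3 : eLpNorm F P μ ≤ eLpNorm f P μ + eLpNorm (deriv f) P μ :=
      le_trans h1 (add_le_add le_rfl h2)
    have h4 := ENNReal.toReal_mono
      (ENNReal.add_ne_top.mpr ⟨hf2.eLpNorm_ne_top, hf3.eLpNorm_ne_top⟩) h3
    rwa [ENNReal.toReal_add hf2.eLpNorm_ne_top hf3.eLpNorm_ne_top] at h4
  have hNFnn : 0 ≤ (eLpNorm F P μ).toReal := ENNReal.toReal_nonneg
  -- norms as integrals
  set A := ∫ z, ‖F z‖^p ∂μ with hAdef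
  set B := ∫ z, ‖g z‖^q ∂μ with hBdef
  have hAnn : 0 ≤ A := integral_nonneg (fun z => Real.rpow_nonneg (norm_nonneg _) _)
  have hBnn : 0 ≤ B := integral_nonneg (fun z => Real.rpow_nonneg (norm_nonneg _) _)
  have hNFeq : (eLpNorm F P μ).toReal = A^(1/p) := by
    rw [hFmem.eLpNorm_eq_integral_rpow_norm hP0 hPt]
    rw [ENNReal.toReal_ofReal (Real.rpow_nonneg (integral_nonneg
      (fun z => Real.rpow_nonneg (norm_nonneg _) _)) _)]
    rw [hPdef, ENNReal.toReal_ofReal hp0.le, one_div]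
  have hNgeq : Ng = B^(1/q) := by
    rw [hNgdef, hg2.eLpNorm_eq_integral_rpow_norm hQ0 hQt]
    rw [ENNReal.toReal_ofReal (Real.rpow_nonneg (integral_nonneg
      (fun z => Real.rpow_nonneg (norm_nonneg _) _)) _)]
    rw [hQdef, ENNReal.toReal_ofReal hq0.le, one_div]
  rcases le_or_gt r (1/2) with hhalf | hhalf
  · -- small radius branch : mean value bound
    have hfint : IntegrableOn f (ball (0:ℂ) 1) volume := by
      have h1 : MemLp f 1 μ := hf2.mono_exponent hP1
      have h2 : Integrable f μ := memLp_one_iff_integrable.mp h1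
      rw [IntegrableOn, hrestrict]
      exact h2.smul_measure hπt
    have hgint : IntegrableOn g (ball (0:ℂ) 1) volume := by
      have h1 : MemLp g 1 μ := hg2.mono_exponent hQ1
      have h2 : Integrable g μ := memLp_one_iff_integrable.mp h1
      rw [IntegrableOn, hrestrict]
      exact h2.smul_measure hπt
    set If := ∫ z in ball (0:ℂ) 1, ‖f z‖ with hIfdef
    set Ig := ∫ z in ball (0:ℂ) 1, ‖g z‖ with hIgdef
    have hIfnn : 0 ≤ If := setIntegral_nonneg measurableSet_ball (fun z _ => norm_nonneg _)
    have hIgnn : 0 ≤ Ig := setIntegral_nonneg measurableSet_ball (fun z _ => norm_nonneg _)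
    have hkey : ∀ θ ∈ Set.uIoc (0:ℝ) (2*Real.pi),
        ‖f (↑r * Complex.exp (↑θ * Complex.I)) *
          (starRingEnd ℂ) (g (↑r * Complex.exp (↑θ * Complex.I)))‖
          ≤ ((16/Real.pi) * If) * ((16/Real.pi) * Ig) := by
      intro θ _
      have hwnorm : ‖(↑r * Complex.exp (↑θ * Complex.I) : ℂ)‖ ≤ 1/2 := by
        rw [norm_mul, Complex.norm_exp_ofReal_mul_I, Complex.norm_real, Real.norm_eq_abs,
          _root_.abs_of_pos hr0, mul_one]
        exact hhalf
      have hbf := disc_mean_value hf hfint hwnorm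
      have hbg := disc_mean_value hg hgint hwnorm
      rw [norm_mul, RCLike.norm_conj]
      exact mul_le_mul hbf hbg (norm_nonneg _) (by positivity)
    have hIb := intervalIntegral.norm_integral_le_of_norm_le_const hkey
    have hval : |2*Real.pi - 0| = 2*Real.pi := by
      rw [sub_zero, _root_.abs_of_pos (by positivity)]
    rw [hval] at hIb
    have hbound : ‖circlePairing f g r‖ ≤ ((16/Real.pi) * If) * ((16/Real.pi) * Ig) := by
      rw [circlePairing, norm_smul, Real.norm_eq_abs,
        _root_.abs_of_pos (by positivity : (0:ℝ) < (2*Real.pi)⁻¹)]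
      calc (2*Real.pi)⁻¹ * ‖∫ θ in (0:ℝ)..(2*Real.pi),
            f (↑r * Complex.exp (↑θ * Complex.I)) *
              (starRingEnd ℂ) (g (↑r * Complex.exp (↑θ * Complex.I)))‖
          ≤ (2*Real.pi)⁻¹ * (((16/Real.pi) * If) * ((16/Real.pi) * Ig) * (2*Real.pi)) := by
            apply mul_le_mul_of_nonneg_left hIb (by positivity)
        _ = ((16/Real.pi) * If) * ((16/Real.pi) * Ig) := by field_simp
    -- translate If, Ig to the normalized measure
    have hIfμ : If = Real.pi * ∫ z, ‖f z‖ ∂μ := by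
      rw [hIfdef]
      show ∫ z, ‖f z‖ ∂(volume.restrict (ball (0:ℂ) 1)) = _
      rw [hrestrict, MeasureTheory.integral_smul_measure, ENNReal.toReal_ofReal pi_pos.le, smul_eq_mul]
    have hIgμ : Ig = Real.pi * ∫ z, ‖g z‖ ∂μ := by
      rw [hIgdef]
      show ∫ z, ‖g z‖ ∂(volume.restrict (ball (0:ℂ) 1)) = _
      rw [hrestrict, MeasureTheory.integral_smul_measure, ENNReal.toReal_ofReal pi_pos.le, smul_eq_mul]
    have hL1f : ∫ z, ‖f z‖ ∂μ ≤ Nf := by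
      have he : ∫ z, ‖f z‖ ∂μ = (eLpNorm f 1 μ).toReal := by
        rw [integral_norm_eq_lintegral_enorm hf2.1, eLpNorm_one_eq_lintegral_enorm]
      rw [he, hNfdef]
      exact ENNReal.toReal_mono hf2.eLpNorm_ne_top (eLpNorm_le_eLpNorm_of_exponent_le hP1 hf2.1)
    have hL1g : ∫ z, ‖g z‖ ∂μ ≤ Ng := by
      have he : ∫ z, ‖g z‖ ∂μ = (eLpNorm g 1 μ).toReal := by
        rw [integral_norm_eq_lintegral_enorm hg2.1, eLpNorm_one_eq_lintegral_enorm]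
      rw [he, hNgdef]
      exact ENNReal.toReal_mono hg2.eLpNorm_ne_top (eLpNorm_le_eLpNorm_of_exponent_le hQ1 hg2.1)
    have hfμnn : 0 ≤ ∫ z, ‖f z‖ ∂μ := integral_nonneg (fun z => norm_nonneg _)
    have hgμnn : 0 ≤ ∫ z, ‖g z‖ ∂μ := integral_nonneg (fun z => norm_nonneg _)
    calc ‖circlePairing f g r‖ ≤ ((16/Real.pi) * If) * ((16/Real.pi) * Ig) := hbound
      _ = 256 * (∫ z, ‖f z‖ ∂μ) * (∫ z, ‖g z‖ ∂μ) := by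
          rw [hIfμ, hIgμ]
          field_simp
          ring
      _ ≤ 256 * Nf * (∫ z, ‖g z‖ ∂μ) := by
          apply mul_le_mul_of_nonneg_right _ hgμnn
          exact mul_le_mul_of_nonneg_left hL1f (by norm_num)
      _ ≤ 256 * Nf * Ng := by
          apply mul_le_mul_of_nonneg_left hL1g (by positivity)
      _ ≤ 256 * (Nf + Nf') * Ng := by
          apply mul_le_mul_of_nonneg_right _ hNgnn
          apply mul_le_mul_of_nonneg_left _ (by norm_num)
          linarith
  · -- large radius branch : Hölder estimate
    have hpair := pairing_norm_eq hf hg hr0 hr1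
    have hΦnorm : ‖∫ z in ball (0:ℂ) r, (f z + z * deriv f z) * (starRingEnd ℂ) (g z)‖
        ≤ ∫ z in ball (0:ℂ) r, ‖F z‖ * ‖g z‖ := by
      refine le_trans (norm_integral_le_integral_norm _) (le_of_eq ?_)
      apply MeasureTheory.integral_congr_ae
      apply Filter.Eventually.of_forall
      intro z
      beta_reduce
      rw [norm_mul, RCLike.norm_conj]
    -- MemLp on the restricted measures
    have hF1 : MemLp F P (volume.restrict (ball (0:ℂ) 1)) := by
      rw [hrestrict]; exact hFmem.smul_measure hπt
    have hg1 : MemLp g Q (volume.restrict (ball (0:ℂ) 1)) := by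
      rw [hrestrict]; exact hg2.smul_measure hπt
    have hFr : MemLp F P (volume.restrict (ball (0:ℂ) r)) :=
      hF1.mono_measure (Measure.restrict_mono (ball_subset_ball hr1.le) le_rfl)
    have hgr : MemLp g Q (volume.restrict (ball (0:ℂ) r)) :=
      hg1.mono_measure (Measure.restrict_mono (ball_subset_ball hr1.le) le_rfl)
    have hHold := integral_mul_norm_le_Lp_mul_Lq hpq hFr hgr
    -- monotonicity in the domain
    have hFI : IntegrableOn (fun z => ‖F z‖^p) (ball (0:ℂ) 1) volume := by
      have := hF1.integrable_norm_rpow hP0 hPt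
      rwa [hPdef, ENNReal.toReal_ofReal hp0.le] at this
    have hgI : IntegrableOn (fun z => ‖g z‖^q) (ball (0:ℂ) 1) volume := by
      have := hg1.integrable_norm_rpow hQ0 hQt
      rwa [hQdef, ENNReal.toReal_ofReal hq0.le] at this
    have hmono1 : (∫ z in ball (0:ℂ) r, ‖F z‖^p) ≤ ∫ z in ball (0:ℂ) 1, ‖F z‖^p :=
      setIntegral_mono_set hFI
        (Filter.Eventually.of_forall (fun z => Real.rpow_nonneg (norm_nonneg _) _))
        ((ball_subset_ball hr1.le).eventuallyLE)
    have hmono2 : (∫ z in ball (0:ℂ) r, ‖g z‖^q) ≤ ∫ z in ball (0:ℂ) 1, ‖g z‖^q :=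
      setIntegral_mono_set hgI
        (Filter.Eventually.of_forall (fun z => Real.rpow_nonneg (norm_nonneg _) _))
        ((ball_subset_ball hr1.le).eventuallyLE)
    -- identify the unrestricted integrals
    have hFd : (∫ z in ball (0:ℂ) 1, ‖F z‖^p) = Real.pi * A := by
      show ∫ z, ‖F z‖^p ∂(volume.restrict (ball (0:ℂ) 1)) = _
      rw [hrestrict, MeasureTheory.integral_smul_measure, ENNReal.toReal_ofReal pi_pos.le, smul_eq_mul, hAdef]
    have hgd : (∫ z in ball (0:ℂ) 1, ‖g z‖^q) = Real.pi * B := by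
      show ∫ z, ‖g z‖^q ∂(volume.restrict (ball (0:ℂ) 1)) = _
      rw [hrestrict, MeasureTheory.integral_smul_measure, ENNReal.toReal_ofReal pi_pos.le, smul_eq_mul, hBdef]
    have hrnn1 : 0 ≤ ∫ z in ball (0:ℂ) r, ‖F z‖^p :=
      setIntegral_nonneg measurableSet_ball (fun z _ => Real.rpow_nonneg (norm_nonneg _) _)
    have hrnn2 : 0 ≤ ∫ z in ball (0:ℂ) r, ‖g z‖^q :=
      setIntegral_nonneg measurableSet_ball (fun z _ => Real.rpow_nonneg (norm_nonneg _) _)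
    -- Hölder + monotonicity
    have hH2 : (∫ z in ball (0:ℂ) r, ‖F z‖ * ‖g z‖)
        ≤ (Real.pi * A)^(1/p) * (Real.pi * B)^(1/q) := by
      refine le_trans hHold ?_
      apply mul_le_mul
      · rw [← hFd]
        exact Real.rpow_le_rpow hrnn1 hmono1 (by positivity)
      · rw [← hgd]
        exact Real.rpow_le_rpow hrnn2 hmono2 (by positivity)
      · exact Real.rpow_nonneg hrnn2 _
      · exact Real.rpow_nonneg (mul_nonneg pi_pos.le hAnn) _
    have hsplit : (Real.pi * A)^(1/p) * (Real.pi * B)^(1/q)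
        = Real.pi * (A^(1/p) * B^(1/q)) := by
      rw [Real.mul_rpow pi_pos.le hAnn, Real.mul_rpow pi_pos.le hBnn]
      have : Real.pi^(1/p) * Real.pi^(1/q) = Real.pi := by
        rw [← Real.rpow_add pi_pos]
        rw [show 1/p + 1/q = 1 by
          rw [one_div, one_div]; exact hpq.inv_add_inv_eq_one]
        exact Real.rpow_one _
      calc Real.pi^(1/p) * A^(1/p) * (Real.pi^(1/q) * B^(1/q))
          = (Real.pi^(1/p) * Real.pi^(1/q)) * (A^(1/p) * B^(1/q)) := by ring
        _ = Real.pi * (A^(1/p) * B^(1/q)) := by rw [this]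
    -- assemble
    have hfinal : ‖circlePairing f g r‖ ≤ (r^2)⁻¹ * (A^(1/p) * B^(1/q)) := by
      rw [hpair]
      calc (Real.pi * r^2)⁻¹ *
            ‖∫ z in ball (0:ℂ) r, (f z + z * deriv f z) * (starRingEnd ℂ) (g z)‖
          ≤ (Real.pi * r^2)⁻¹ * (Real.pi * (A^(1/p) * B^(1/q))) := by
            apply mul_le_mul_of_nonneg_left _ (by positivity)
            rw [← hsplit]
            exact le_trans hΦnorm hH2
        _ = (r^2)⁻¹ * (A^(1/p) * B^(1/q)) := by
            field_simp
    have hr4 : (r^2)⁻¹ ≤ 4 := by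
      rw [inv_le_comm₀ (by positivity) (by norm_num)]
      nlinarith
    have hABnn : 0 ≤ A^(1/p) * B^(1/q) :=
      mul_nonneg (Real.rpow_nonneg hAnn _) (Real.rpow_nonneg hBnn _)
    calc ‖circlePairing f g r‖ ≤ (r^2)⁻¹ * (A^(1/p) * B^(1/q)) := hfinal
      _ ≤ 4 * (A^(1/p) * B^(1/q)) := mul_le_mul_of_nonneg_right hr4 hABnn
      _ = 4 * (eLpNorm F P μ).toReal * Ng := by rw [hNFeq, hNgeq]; ring
      _ ≤ 4 * (Nf + Nf') * Ng := by
          apply mul_le_mul_of_nonneg_right _ hNgnn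
          exact mul_le_mul_of_nonneg_left hNF (by norm_num)
      _ ≤ 256 * (Nf + Nf') * Ng := by
          apply mul_le_mul_of_nonneg_right _ hNgnn
          apply mul_le_mul_of_nonneg_right _ (by linarith)
          norm_num

end
end
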